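/- Let d : B → C, p : C → D with pd = coker(g) for g : B' → B and h = ker(p) : C' → C. Then the square with top row [d h] : B ⊕ C' → C, right morphism p, bottom row pd : B → D, left morphism the projection B ⊕ C' → B, is a pullback square; consequently if pd is a semi-stable cokernel then [d h] : B ⊕ C' → C is a cokernel, and p = coker(h). -/

import Mathlib

open CategoryTheory CategoryTheory.Limits ZeroObject

universe v u

variable {𝒞 : Type u} [Category.{v} 𝒞] [Preadditive 𝒞] [HasZeroObject 𝒞] [HasBinaryBiproducts 𝒞]

/-- `d` is a cokernel of some morphism. -/
def IsCokernelOfSome {B X : 𝒞} (d : B ⟶ X) : Prop :=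
  ∃ (A : 𝒞) (f : A ⟶ B) (w : f ≫ d = 0), Nonempty (IsColimit (CokernelCofork.ofπ d w))

/-- `i` is a kernel of some morphism. -/
def IsKernelOfSome {A B : 𝒞} (i : A ⟶ B) : Prop :=
  ∃ (X : 𝒞) (f : B ⟶ X) (w : i ≫ f = 0), Nonempty (IsLimit (KernelFork.ofι i w))

/-- A semi-stable cokernel: a cokernel whose pullback along every morphism exists
and is again a cokernel. -/
def IsSemiStableCokernel {B X : 𝒞} (d : B ⟶ X) : Prop :=
  IsCokernelOfSome d ∧ ∀ (C' : 𝒞) (h : C' ⟶ X), ∃ (B' : 𝒞) (g : B' ⟶ B) (d' : B' ⟶ C'),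
    IsPullback g d' d h ∧ IsCokernelOfSome d'

/-- A semi-stable kernel: a kernel whose pushout along every morphism exists
and is again a kernel. -/
def IsSemiStableKernel {A B : 𝒞} (i : A ⟶ B) : Prop :=
  IsKernelOfSome i ∧ ∀ (A' : 𝒞) (h : A ⟶ A'), ∃ (P : 𝒞) (g : B ⟶ P) (i' : A' ⟶ P),
    IsPushout i h g i' ∧ IsKernelOfSome i'

theorem stmt14 {B X D C' B' : 𝒞} (d : B ⟶ X) (p : X ⟶ D)
    (h : C' ⟶ X) (wh : h ≫ p = 0) (hker : IsLimit (KernelFork.ofι h wh))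
    (g : B' ⟶ B) (wg : g ≫ (d ≫ p) = 0)
    (hcok : IsColimit (CokernelCofork.ofπ (d ≫ p) wg)) :
    IsPullback (biprod.fst : B ⊞ C' ⟶ B) (biprod.desc d h) (d ≫ p) p ∧
      (IsSemiStableCokernel (d ≫ p) →
        IsCokernelOfSome (biprod.desc d h) ∧
          Nonempty (IsColimit (CokernelCofork.ofπ p wh))) := by
  have hmono : Mono h := mono_of_isLimit_fork hker
  have comm : (biprod.fst : B ⊞ C' ⟶ B) ≫ (d ≫ p) = biprod.desc d h ≫ p := by
    apply biprod.hom_ext' <;> simp [wh]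
  -- the pullback property
  have hpb : IsPullback (biprod.fst : B ⊞ C' ⟶ B) (biprod.desc d h) (d ≫ p) p := by
    refine IsPullback.of_isLimit' ⟨comm⟩ ?_
    refine PullbackCone.IsLimit.mk _
      (fun s => biprod.lift s.fst
        (KernelFork.IsLimit.lift' hker (s.snd - s.fst ≫ d)
          (by simp [Preadditive.sub_comp, ← s.condition])).1) ?_ ?_ ?_
    · intro s; simp
    · intro s
      have := (KernelFork.IsLimit.lift' hker (s.snd - s.fst ≫ d)
          (by simp [Preadditive.sub_comp, ← s.condition])).2
      simp only [Fork.ι_ofι] at this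
      simp only [biprod.lift_desc]
      rw [this]
      abel
    · intro s m hm1 hm2
      apply biprod.hom_ext
      · simpa using hm1
      · rw [← cancel_mono h]
        have := (KernelFork.IsLimit.lift' hker (s.snd - s.fst ≫ d)
            (by simp [Preadditive.sub_comp, ← s.condition])).2
        simp only [Fork.ι_ofι] at this
        simp only [biprod.lift_snd]
        rw [this, ← hm2]
        have hdesc : (biprod.desc d h : B ⊞ C' ⟶ X)
            = biprod.fst ≫ d + biprod.snd ≫ h := by
          apply biprod.hom_ext' <;> simp
        rw [hdesc, Preadditive.comp_add, ← Category.assoc, ← Category.assoc, hm1]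
        abel
  refine ⟨hpb, fun hss => ?_⟩
  -- transfer the cokernel property along the pullback isomorphism
  obtain ⟨B'', g'', d'', hpb', A, k, wk, ⟨hk⟩⟩ := hss.2 X p
  let e : B'' ≅ B ⊞ C' := hpb'.isoIsPullback _ _ hpb
  have he : e.hom ≫ biprod.desc d h = d'' := by simp [e]
  have wk' : (k ≫ e.hom) ≫ biprod.desc d h = 0 := by rw [Category.assoc, he, wk]
  have hcc : IsColimit (CokernelCofork.ofπ (biprod.desc d h) wk') := by
    refine CokernelCofork.IsColimit.ofπ _ _
      (fun {Z'} φ hφ => (CokernelCofork.IsColimit.desc' hk (e.hom ≫ φ)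
        (by rw [← Category.assoc]; exact hφ)).1) ?_ ?_
    · intro Z' φ hφ
      have := (CokernelCofork.IsColimit.desc' hk (e.hom ≫ φ)
        (by rw [← Category.assoc]; exact hφ)).2
      simp only [Cofork.π_ofπ] at this
      rw [← cancel_epi e.hom, ← Category.assoc, he, this]
    · intro Z' φ hφ m hm
      apply Cofork.IsColimit.hom_ext hk
      have := (CokernelCofork.IsColimit.desc' hk (e.hom ≫ φ)
        (by rw [← Category.assoc]; exact hφ)).2
      simp only [Cofork.π_ofπ] at this ⊢
      rw [this]
      have h2 : d'' ≫ m = (e.hom ≫ biprod.desc d h) ≫ m :=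
        congrArg (fun t => t ≫ m) he.symm
      rw [h2, Category.assoc, hm]
  have hepi : Epi (biprod.desc d h) :=
    ⟨fun u v huv => Cofork.IsColimit.hom_ext hcc huv⟩
  refine ⟨⟨A, k ≫ e.hom, wk', ⟨hcc⟩⟩, ⟨?_⟩⟩
  -- p is the cokernel of h
  have hepip : Epi p := by
    have : Epi (d ≫ p) := ⟨fun u v huv => Cofork.IsColimit.hom_ext hcok huv⟩
    exact epi_of_epi d p
  refine CokernelCofork.IsColimit.ofπ' _ _ (fun {T} φ hφ => ?_)
  -- factor g ≫ d through the kernel h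
  obtain ⟨u, hu⟩ := KernelFork.IsLimit.lift' hker (g ≫ d)
    (by rw [Category.assoc]; exact wg)
  simp only [Fork.ι_ofι] at hu
  have hgd : g ≫ (d ≫ φ) = 0 := by
    rw [← Category.assoc, ← hu, Category.assoc, hφ, Limits.comp_zero]
  obtain ⟨ψ, hψ⟩ := CokernelCofork.IsColimit.desc' hcok (d ≫ φ) hgd
  simp only [Cofork.π_ofπ] at hψ
  refine ⟨ψ, ?_⟩
  rw [← cancel_epi (biprod.desc d h)]
  apply biprod.hom_ext' <;> simp only [biprod.inl_desc_assoc, biprod.inr_desc_assoc,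
    biprod.inl_desc, biprod.inr_desc]
  · rw [← Category.assoc, hψ]
  · rw [← Category.assoc, wh, Limits.zero_comp, hφ]
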